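/- Let D be a strongly connected digraph belonging to the class 𝒟 and let M be a maximum matching of D. Then both endpoints of any alternating cycle chain of length three with respect to M are pendant vertices, and any alternating cycle chain of length one with respect to M is a pendant 2-cycle. -/

import Mathlib

open Matrix

/-- Adjacency in a digraph given by relation `G`: a 2-cycle between distinct `i` and `j`. -/
def Adjd {n : ℕ} (G : Fin n → Fin n → Prop) (i j : Fin n) : Prop :=
  i ≠ j ∧ G i j ∧ G j i

/-- `G` is a simple symmetric digraph: no loops and edges come in both directions. -/
def IsSSD {n : ℕ} (G : Fin n → Fin n → Prop) : Prop :=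
  (∀ i, ¬ G i i) ∧ ∀ i j, G i j → G j i

/-- A vertex is pendant if it is incident to exactly one 2-cycle. -/
def Pendant {n : ℕ} (G : Fin n → Fin n → Prop) (i : Fin n) : Prop :=
  ∃! j, Adjd G i j

/-- The class 𝒟: simple symmetric digraphs in which every non-pendant vertex is
adjacent to at least one pendant vertex. -/
def InClassD {n : ℕ} (G : Fin n → Fin n → Prop) : Prop :=
  IsSSD G ∧ ∀ i, ¬ Pendant G i → ∃ j, Adjd G i j ∧ Pendant G j

/-- Strong connectivity: a directed path from every vertex to every other vertex. -/
def StronglyConnected {n : ℕ} (G : Fin n → Fin n → Prop) : Prop :=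
  ∀ i j : Fin n, Relation.ReflTransGen G i j

/-- An unordered pair `e` is a 2-cycle of `G`. -/
def IsEdge {n : ℕ} (G : Fin n → Fin n → Prop) (e : Sym2 (Fin n)) : Prop :=
  ∃ i j, e = s(i, j) ∧ Adjd G i j

/-- A matching: a set of pairwise vertex-disjoint 2-cycles. -/
def IsMatching {n : ℕ} (G : Fin n → Fin n → Prop) (M : Finset (Sym2 (Fin n))) : Prop :=
  (∀ e ∈ M, IsEdge G e) ∧
  ∀ e ∈ M, ∀ f ∈ M, e ≠ f → ∀ v : Fin n, v ∈ e → v ∉ f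

/-- A maximum matching: a matching of maximum cardinality. -/
def IsMaxMatching {n : ℕ} (G : Fin n → Fin n → Prop) (M : Finset (Sym2 (Fin n))) : Prop :=
  IsMatching G M ∧ ∀ M', IsMatching G M' → M'.card ≤ M.card

/-- A cycle chain, recorded by its list of (distinct) vertices `i₁, …, i_{m+1}`. -/
def IsCycleChain {n : ℕ} (G : Fin n → Fin n → Prop) (c : List (Fin n)) : Prop :=
  c.Nodup ∧ 2 ≤ c.length ∧ c.Chain' (Adjd G)

/-- A cycle chain from `i` to `j`. -/
def IsCycleChainBtw {n : ℕ} (G : Fin n → Fin n → Prop) (i j : Fin n) (c : List (Fin n)) : Prop :=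
  IsCycleChain G c ∧ c.head? = some i ∧ c.getLast? = some j

/-- The list of 2-cycles of a cycle chain. -/
def chainEdges {n : ℕ} (c : List (Fin n)) : List (Sym2 (Fin n)) :=
  List.zipWith (fun a b => s(a, b)) c c.tail

/-- The cycle chain `c` is alternating with respect to `M`: its 2-cycles are alternately
in `M` and outside `M`, with the first and last 2-cycle in `M` (so its length is odd). -/
def IsAltChain {n : ℕ} (M : Finset (Sym2 (Fin n))) (c : List (Fin n)) : Prop :=
  Odd (chainEdges c).length ∧
  ∀ k (h : k < (chainEdges c).length), ((chainEdges c).get ⟨k, h⟩ ∈ M ↔ Even k)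

/-- The digraph of a square matrix: edge `(i,j)` iff `A i j ≠ 0`. -/
def DA {n : ℕ} (A : Matrix (Fin n) (Fin n) ℝ) : Fin n → Fin n → Prop :=
  fun i j => A i j ≠ 0

/-- The cycle product `a_{ij} a_{ji}` of a 2-cycle. -/
def cycProd {n : ℕ} (A : Matrix (Fin n) (Fin n) ℝ) (e : Sym2 (Fin n)) : ℝ :=
  Sym2.lift ⟨fun i j => A i j * A j i, fun i j => mul_comm _ _⟩ e

/-- The matching product η(M) of a matching `M`. -/
noncomputable def matchProd {n : ℕ} (A : Matrix (Fin n) (Fin n) ℝ)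
    (M : Finset (Sym2 (Fin n))) : ℝ :=
  ∏ e ∈ M, cycProd A e

/-- The (finite) collection of all maximum matchings of `D(A)`. -/
noncomputable def maxMatchings {n : ℕ} (A : Matrix (Fin n) (Fin n) ℝ) :
    Finset (Finset (Sym2 (Fin n))) :=
  {M | IsMaxMatching (DA A) M}.toFinite.toFinset

/-- Δ_A: the sum of the matching products over all maximum matchings of `D(A)`. -/
noncomputable def Delta {n : ℕ} (A : Matrix (Fin n) (Fin n) ℝ) : ℝ :=
  ∑ M ∈ maxMatchings A, matchProd A M

/-- 𝕄(i,j): maximum matchings with respect to which some cycle chain from `i` to `j`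
is an alternating cycle chain. -/
def MMset {n : ℕ} (A : Matrix (Fin n) (Fin n) ℝ) (i j : Fin n) :
    Set (Finset (Sym2 (Fin n))) :=
  {M | IsMaxMatching (DA A) M ∧ ∃ c, IsCycleChainBtw (DA A) i j c ∧ IsAltChain M c}

/-- `i` and `j` are maximally matchable: 𝕄(i,j) ≠ ∅. -/
def MaxMatchable {n : ℕ} (A : Matrix (Fin n) (Fin n) ℝ) (i j : Fin n) : Prop :=
  (MMset A i j).Nonempty

open scoped Classical in
/-- The (unique) alternating cycle chain from `i` to `j`, when it exists. -/
noncomputable def theChain {n : ℕ} (A : Matrix (Fin n) (Fin n) ℝ) (i j : Fin n) :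
    List (Fin n) :=
  if h : ∃ c, IsCycleChainBtw (DA A) i j c ∧ ∃ M ∈ MMset A i j, IsAltChain M c
  then h.choose else []

/-- The path product along a cycle chain: `a_{i₁ i₂} a_{i₂ i₃} ⋯ a_{i_m i_{m+1}}`. -/
def pathProd {n : ℕ} (A : Matrix (Fin n) (Fin n) ℝ) (c : List (Fin n)) : ℝ :=
  (List.zipWith (fun a b => A a b) c c.tail).prod

open scoped Classical in
/-- β_{ij} = (−1)^{(m−1)/2} P_m(i,j) for maximally matchable `i, j`, and `0` otherwise. -/
noncomputable def beta {n : ℕ} (A : Matrix (Fin n) (Fin n) ℝ) (i j : Fin n) : ℝ :=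
  if MaxMatchable A i j then
    (-1 : ℝ) ^ (((theChain A i j).length - 2) / 2) * pathProd A (theChain A i j)
  else 0

/-- β̄_{i,j}(M): product of the cycle products of the 2-cycles of `M` not contained in
the alternating cycle chain from `i` to `j`. -/
noncomputable def betaBar {n : ℕ} (A : Matrix (Fin n) (Fin n) ℝ) (i j : Fin n)
    (M : Finset (Sym2 (Fin n))) : ℝ :=
  ∏ e ∈ M.filter (fun e => e ∉ chainEdges (theChain A i j)), cycProd A e

/-- μ_{ij} = β_{ij} · Σ_{M ∈ 𝕄(i,j)} β̄_{i,j}(M). -/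
noncomputable def mu {n : ℕ} (A : Matrix (Fin n) (Fin n) ℝ) (i j : Fin n) : ℝ :=
  beta A i j * ∑ M ∈ (MMset A i j).toFinite.toFinset, betaBar A i j M

/-- `X` is a group inverse of `A`. -/
def IsGroupInverse {n : ℕ} (A X : Matrix (Fin n) (Fin n) ℝ) : Prop :=
  A * X * A = A ∧ X * A * X = X ∧ A * X = X * A

/-- A tree digraph: strongly connected and all of its cycles have length 2. -/
def IsTreeDigraph {n : ℕ} (G : Fin n → Fin n → Prop) : Prop :=
  StronglyConnected G ∧
  ∀ (a : Fin n) (l : List (Fin n)), (a :: l).Nodup → List.Chain G a l →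
    G ((a :: l).getLast (List.cons_ne_nil a l)) a → (a :: l).length = 2

/-- A star tree digraph: a tree digraph with a center adjacent to every other vertex,
every other vertex being adjacent only to the center. -/
def IsStarTree {n : ℕ} (G : Fin n → Fin n → Prop) : Prop :=
  IsTreeDigraph G ∧
  ∃ c : Fin n, (∀ j, j ≠ c → Adjd G c j) ∧ ∀ i j, Adjd G i j → i = c ∨ j = c

/-- A corona digraph: a simple symmetric digraph in which each non-pendant vertex is
adjacent to exactly one pendant vertex. -/
def IsCorona {n : ℕ} (G : Fin n → Fin n → Prop) : Prop :=
  IsSSD G ∧ ∀ i, ¬ Pendant G i → ∃! j, Adjd G i j ∧ Pendant G j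

/-- 𝕄(i): the maximum matchings in which vertex `i` is matched. -/
noncomputable def MMi {n : ℕ} (A : Matrix (Fin n) (Fin n) ℝ) (i : Fin n) :
    Finset (Finset (Sym2 (Fin n))) :=
  {M | IsMaxMatching (DA A) M ∧ ∃ e ∈ M, i ∈ e}.toFinite.toFinset

private lemma adjd_symm {n : ℕ} {G : Fin n → Fin n → Prop} {i j : Fin n}
    (h : Adjd G i j) : Adjd G j i := ⟨h.1.symm, h.2.2, h.2.1⟩

private lemma pendant_unique {n : ℕ} {G : Fin n → Fin n → Prop} {p x y : Fin n}
    (hp : Pendant G p) (hx : Adjd G p x) (hy : Adjd G p y) : x = y := by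
  obtain ⟨z, _, hz⟩ := hp
  rw [hz x hx, hz y hy]

private lemma not_pendant_of_two {n : ℕ} {G : Fin n → Fin n → Prop} {a u v : Fin n}
    (hu : Adjd G a u) (hv : Adjd G a v) (huv : u ≠ v) : ¬ Pendant G a :=
  fun hp => huv (pendant_unique hp hu hv)

private lemma adjd_of_edge_mem {n : ℕ} {G : Fin n → Fin n → Prop} {M : Finset (Sym2 (Fin n))}
    (hM : IsMatching G M) {x y : Fin n} (he : s(x, y) ∈ M) : Adjd G x y := by
  obtain ⟨u, v, huv, hadj⟩ := hM.1 _ he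
  rw [Sym2.eq_iff] at huv
  rcases huv with ⟨rfl, rfl⟩ | ⟨rfl, rfl⟩
  · exact hadj
  · exact adjd_symm hadj

private lemma pendant_unmatched {n : ℕ} {G : Fin n → Fin n → Prop} {M : Finset (Sym2 (Fin n))}
    (hM : IsMatching G M) {e : Sym2 (Fin n)} (he : e ∈ M) {x p : Fin n}
    (hx : x ∈ e) (hp : Pendant G p) (hpx : Adjd G p x) (hpe : p ∉ e) :
    ∀ f ∈ M, p ∉ f := by
  intro f hf hpf
  obtain ⟨u, v, rfl, hadj⟩ := hM.1 f hf
  have hfe : s(u, v) ≠ e := fun h => hpe (h ▸ hpf)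
  have hxf : x ∉ s(u, v) := hM.2 e he _ hf hfe.symm x hx
  rcases Sym2.mem_iff.1 hpf with rfl | rfl
  · have hxv : x = v := pendant_unique hp hpx hadj
    subst hxv
    exact hxf (Sym2.mem_mk_right _ _)
  · have hxu : x = u := pendant_unique hp hpx (adjd_symm hadj)
    subst hxu
    exact hxf (Sym2.mem_mk_left _ _)

private lemma matching_subset {n : ℕ} {G : Fin n → Fin n → Prop}
    {M M' : Finset (Sym2 (Fin n))}
    (h : M' ⊆ M) (hM : IsMatching G M) : IsMatching G M' :=
  ⟨fun e he => hM.1 e (h he), fun e he f hf => hM.2 e (h he) f (h hf)⟩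

private lemma matching_insert {n : ℕ} {G : Fin n → Fin n → Prop}
    {M : Finset (Sym2 (Fin n))} {e : Sym2 (Fin n)}
    (hM : IsMatching G M) (he : IsEdge G e) (hd : ∀ v ∈ e, ∀ f ∈ M, v ∉ f) :
    IsMatching G (insert e M) := by
  constructor
  · intro f hf
    rcases Finset.mem_insert.1 hf with rfl | hf
    · exact he
    · exact hM.1 f hf
  · intro a ha b hb hab v hva
    rcases Finset.mem_insert.1 ha with rfl | ha'
    · rcases Finset.mem_insert.1 hb with rfl | hb'
      · exact absurd rfl hab
      · exact hd v hva b hb'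
    · rcases Finset.mem_insert.1 hb with rfl | hb'
      · exact fun hvb => hd v hvb a ha' hva
      · exact hM.2 a ha' b hb' hab v hva

private lemma aug {n : ℕ} {G : Fin n → Fin n → Prop} {M : Finset (Sym2 (Fin n))}
    (hM : IsMaxMatching G M) {x y p q : Fin n} (he : s(x, y) ∈ M)
    (hp : Pendant G p) (hq : Pendant G q)
    (hpx : Adjd G p x) (hqy : Adjd G q y)
    (hpq : p ≠ q) (hpy : p ≠ y) (hqx : q ≠ x) : False := by
  have hxy : Adjd G x y := adjd_of_edge_mem hM.1 he
  have hpe : p ∉ s(x, y) := by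
    rw [Sym2.mem_iff]; rintro (rfl | rfl)
    · exact hpx.1 rfl
    · exact hpy rfl
  have hqe : q ∉ s(x, y) := by
    rw [Sym2.mem_iff]; rintro (rfl | rfl)
    · exact hqx rfl
    · exact hqy.1 rfl
  have hx : x ∈ s(x, y) := Sym2.mem_mk_left x y
  have hy : y ∈ s(x, y) := Sym2.mem_mk_right x y
  have hup : ∀ f ∈ M, p ∉ f := pendant_unmatched hM.1 he hx hp hpx hpe
  have huq : ∀ f ∈ M, q ∉ f := pendant_unmatched hM.1 he hy hq hqy hqe
  set M0 := M.erase s(x, y) with hM0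
  have hM0m : IsMatching G M0 := matching_subset (Finset.erase_subset _ _) hM.1
  have hd1 : ∀ v ∈ s(q, y), ∀ f ∈ M0, v ∉ f := by
    intro v hv f hf
    have hfM : f ∈ M := Finset.mem_of_mem_erase hf
    have hfe : f ≠ s(x, y) := Finset.ne_of_mem_erase hf
    rcases Sym2.mem_iff.1 hv with rfl | rfl
    · exact huq f hfM
    · exact hM.1.2 _ he f hfM hfe.symm v hy
  have hM1 : IsMatching G (insert s(q, y) M0) :=
    matching_insert hM0m ⟨q, y, rfl, hqy⟩ hd1
  have hd2 : ∀ v ∈ s(p, x), ∀ f ∈ insert s(q, y) M0, v ∉ f := by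
    intro v hv f hf
    rcases Sym2.mem_iff.1 hv with rfl | rfl
    · rcases Finset.mem_insert.1 hf with rfl | hf
      · rw [Sym2.mem_iff]; rintro (rfl | rfl)
        · exact hpq rfl
        · exact hpy rfl
      · exact hup f (Finset.mem_of_mem_erase hf)
    · rcases Finset.mem_insert.1 hf with rfl | hf
      · rw [Sym2.mem_iff]; rintro (rfl | rfl)
        · exact hqx rfl
        · exact hxy.1 rfl
      · exact hM.1.2 _ he f (Finset.mem_of_mem_erase hf)
          (Finset.ne_of_mem_erase hf).symm v hx
  have hM2 : IsMatching G (insert s(p, x) (insert s(q, y) M0)) :=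
    matching_insert hM1 ⟨p, x, rfl, hpx⟩ hd2
  have hqy0 : s(q, y) ∉ M0 :=
    fun h => huq _ (Finset.mem_of_mem_erase h) (Sym2.mem_mk_left q y)
  have hpx1 : s(p, x) ∉ insert s(q, y) M0 :=
    fun h => hd2 p (Sym2.mem_mk_left p x) _ h (Sym2.mem_mk_left p x)
  have hc1 : (insert s(q, y) M0).card = M0.card + 1 := Finset.card_insert_of_notMem hqy0
  have hc2 : (insert s(p, x) (insert s(q, y) M0)).card = M0.card + 2 := by
    rw [Finset.card_insert_of_notMem hpx1, hc1]
  have hc0 : M0.card = M.card - 1 := Finset.card_erase_of_mem he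
  have hMpos : 1 ≤ M.card := Finset.card_pos.2 ⟨_, he⟩
  have hle := hM.2 _ hM2
  omega

/-- Remark 2.4: the endpoints of a length-3 alternating cycle chain are pendant vertices,
and a length-1 alternating cycle chain is a pendant 2-cycle. -/
theorem alt_chain_endpoints_pendant {n : ℕ} (G : Fin n → Fin n → Prop)
    (hD : InClassD G) (hSC : StronglyConnected G)
    (M : Finset (Sym2 (Fin n))) (hM : IsMaxMatching G M)
    (i j : Fin n) (c : List (Fin n))
    (hc : IsCycleChainBtw G i j c) (ha : IsAltChain M c) :
    ((chainEdges c).length = 3 → Pendant G i ∧ Pendant G j) ∧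
      ((chainEdges c).length = 1 → Pendant G i ∨ Pendant G j) := by
  obtain ⟨⟨hnd, hlen2, hch⟩, hhd, hlast⟩ := hc
  have hcel : (chainEdges c).length = c.length - 1 := by
    simp only [chainEdges, List.length_zipWith, List.length_tail]
    omega
  constructor
  · intro h3
    have hlen : c.length = 4 := by omega
    clear hlen2
    rcases c with _ | ⟨a₁, c⟩; · simp at hlen
    rcases c with _ | ⟨a₂, c⟩; · simp at hlen
    rcases c with _ | ⟨a₃, c⟩; · simp at hlen
    rcases c with _ | ⟨a₄, c⟩; · simp at hlen
    rcases c with _ | ⟨a₅, c⟩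
    swap
    · simp at hlen
    have hi : a₁ = i := by simpa using hhd
    have hj : a₄ = j := by simpa using hlast
    subst hi hj
    simp only [List.Chain', List.isChain_cons_cons, List.isChain_singleton, and_true] at hch
    obtain ⟨h12, h23, h34⟩ := hch
    have hn12 : a₁ ≠ a₂ := h12.1
    have hn13 : a₁ ≠ a₃ := by simp [List.nodup_cons] at hnd; tauto
    have hn24 : a₂ ≠ a₄ := by simp [List.nodup_cons] at hnd; tauto
    have hn34 : a₃ ≠ a₄ := h34.1
    have h0 : s(a₁, a₂) ∈ M := by
      have := (ha.2 0 (by rw [h3]; norm_num)).2 (by norm_num)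
      exact this
    have h2 : s(a₃, a₄) ∈ M := by
      have := (ha.2 2 (by rw [h3]; norm_num)).2 (by norm_num)
      exact this
    constructor
    · by_contra hnp
      obtain ⟨p, hip, hp⟩ := hD.2 a₁ hnp
      have hbnp : ¬ Pendant G a₂ := not_pendant_of_two (adjd_symm h12) h23 hn13
      obtain ⟨q, hbq, hq⟩ := hD.2 a₂ hbnp
      refine aug hM h0 hp hq (adjd_symm hip) (adjd_symm hbq) ?_ ?_ ?_
      · rintro rfl
        exact hn12 (pendant_unique hp (adjd_symm hip) (adjd_symm hbq))
      · rintro rfl; exact hbnp hp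
      · rintro rfl; exact hnp hq
    · by_contra hnp
      obtain ⟨q, hjq, hq⟩ := hD.2 a₄ hnp
      have hdnp : ¬ Pendant G a₃ := not_pendant_of_two (adjd_symm h23) h34 hn24
      obtain ⟨p, hdp, hp⟩ := hD.2 a₃ hdnp
      have h2' : s(a₄, a₃) ∈ M := by rwa [Sym2.eq_swap] at h2
      refine aug hM h2' hq hp (adjd_symm hjq) (adjd_symm hdp) ?_ ?_ ?_
      · rintro rfl
        exact (Ne.symm hn34) (pendant_unique hq (adjd_symm hjq) (adjd_symm hdp))
      · rintro rfl; exact hdnp hq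
      · rintro rfl; exact hnp hp
  · intro h1
    have hlen : c.length = 2 := by omega
    clear hlen2
    rcases c with _ | ⟨a₁, c⟩; · simp at hlen
    rcases c with _ | ⟨a₂, c⟩; · simp at hlen
    rcases c with _ | ⟨a₃, c⟩
    swap
    · simp at hlen
    have hi : a₁ = i := by simpa using hhd
    have hj : a₂ = j := by simpa using hlast
    subst hi hj
    simp only [List.Chain', List.isChain_cons_cons, List.isChain_singleton, and_true] at hch
    have hij : a₁ ≠ a₂ := hch.1
    have h0 : s(a₁, a₂) ∈ M := by
      have := (ha.2 0 (by rw [h1]; norm_num)).2 (by norm_num)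
      exact this
    by_contra hcon
    push_neg at hcon
    obtain ⟨hi', hj'⟩ := hcon
    obtain ⟨p, hip, hp⟩ := hD.2 a₁ hi'
    obtain ⟨q, hjq, hq⟩ := hD.2 a₂ hj'
    refine aug hM h0 hp hq (adjd_symm hip) (adjd_symm hjq) ?_ ?_ ?_
    · rintro rfl
      exact hij (pendant_unique hp (adjd_symm hip) (adjd_symm hjq))
    · rintro rfl; exact hj' hp
    · rintro rfl; exact hi' hq
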